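/- Let p ≥ 2 be an integer and β > β*(p), and for each n let X = (X_1,…,X_n) be distributed according to the p-tensor Curie-Weiss model P_{β,p} on {−1,1}^n. Then the maximum pseudolikelihood estimator η_p(X̄_n) converges in probability to β as n → ∞; that is, for every ε > 0, P_{β,p}(|η_p(X̄_n) − β| > ε) → 0. -/

import Mathlib

open Real Set Filter

/-- `I(x) = ½[(1+x)log(1+x) + (1−x)log(1−x)]` (with `Real.log 0 = 0`). -/
noncomputable def bahI (x : ℝ) : ℝ :=
  ((1 + x) * Real.log (1 + x) + (1 - x) * Real.log (1 - x)) / 2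

/-- `H_{β,p}(x) = β xᵖ − I(x)`. -/
noncomputable def bahH (β : ℝ) (p : ℕ) (x : ℝ) : ℝ := β * x ^ p - bahI x

/-- `β*(p) = sup {β ≥ 0 : sup_{x∈[−1,1]} H_{β,p}(x) = 0}`. -/
noncomputable def betaStar (p : ℕ) : ℝ :=
  sSup {β : ℝ | 0 ≤ β ∧ sSup (bahH β p '' Set.Icc (-1 : ℝ) 1) = 0}

/-- inverse hyperbolic tangent. -/
noncomputable def arctanh (x : ℝ) : ℝ := Real.log ((1 + x) / (1 - x)) / 2

/-- `η_p(t) = p⁻¹ t^{1−p} arctanh t` for `t ≠ 0`, and `η_p(0) = 0`. -/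
noncomputable def etaFn (p : ℕ) (t : ℝ) : ℝ :=
  if t = 0 then 0 else (p : ℝ)⁻¹ * t ^ (1 - (p : ℤ)) * arctanh t

/-- The spin value of a Boolean coordinate: `true ↦ 1`, `false ↦ −1`. -/
noncomputable def spin (b : Bool) : ℝ := if b then 1 else -1

/-- The average magnetization `X̄ = n⁻¹ Σᵢ Xᵢ` of a configuration in `{−1,1}ⁿ`. -/
noncomputable def mag {n : ℕ} (σ : Fin n → Bool) : ℝ := (∑ i, spin (σ i)) / n

/-- The unnormalized Curie–Weiss weight `exp(β n^{1−p} (Σᵢ xᵢ)ᵖ)` of a configuration. -/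
noncomputable def cwWeight (β : ℝ) (p n : ℕ) (σ : Fin n → Bool) : ℝ :=
  Real.exp (β * (n : ℝ) ^ (1 - (p : ℤ)) * (∑ i, spin (σ i)) ^ p)

/-- The probability of the event `E` under the `p`-tensor Curie–Weiss model `P_{β,p}`
on `{−1,1}ⁿ` (the normalizations `2ⁿ Z_n(β,p)` cancel in this ratio). -/
noncomputable def cwProb (β : ℝ) (p n : ℕ) (E : Set (Fin n → Bool)) : ℝ :=
  (∑ σ : Fin n → Bool, E.indicator (cwWeight β p n) σ)
    / ∑ σ : Fin n → Bool, cwWeight β p n σ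

lemma sub_one_le_mul_log {y : ℝ} (hy : 0 ≤ y) : y - 1 ≤ y * Real.log y := by
  rcases eq_or_lt_of_le hy with h | h
  · simp [← h]
  · have h1 : Real.log y⁻¹ ≤ y⁻¹ - 1 := Real.log_le_sub_one_of_pos (by positivity)
    rw [Real.log_inv] at h1
    have h2 : y * y⁻¹ = 1 := mul_inv_cancel₀ h.ne'
    nlinarith

lemma bahI_zero : bahI 0 = 0 := by simp [bahI]

lemma bahI_nonneg {x : ℝ} (hx : x ∈ Icc (-1:ℝ) 1) : 0 ≤ bahI x := by
  obtain ⟨h1, h2⟩ := hx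
  have a1 := sub_one_le_mul_log (y := 1 + x) (by linarith)
  have a2 := sub_one_le_mul_log (y := 1 - x) (by linarith)
  unfold bahI; linarith

lemma bahI_le_log_two {x : ℝ} (hx : x ∈ Icc (-1:ℝ) 1) : bahI x ≤ Real.log 2 := by
  obtain ⟨h1, h2⟩ := hx
  have k1 : Real.log (1 + x) ≤ Real.log 2 := by
    rcases eq_or_lt_of_le (by linarith : (0:ℝ) ≤ 1 + x) with h | h
    · rw [← h, Real.log_zero]; exact Real.log_nonneg (by norm_num)
    · exact Real.log_le_log h (by linarith)
  have k2 : Real.log (1 - x) ≤ Real.log 2 := by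
    rcases eq_or_lt_of_le (by linarith : (0:ℝ) ≤ 1 - x) with h | h
    · rw [← h, Real.log_zero]; exact Real.log_nonneg (by norm_num)
    · exact Real.log_le_log h (by linarith)
  have m1 : (1 + x) * Real.log (1 + x) ≤ (1 + x) * Real.log 2 :=
    mul_le_mul_of_nonneg_left k1 (by linarith)
  have m2 : (1 - x) * Real.log (1 - x) ≤ (1 - x) * Real.log 2 :=
    mul_le_mul_of_nonneg_left k2 (by linarith)
  unfold bahI; nlinarith

lemma continuous_bahI : Continuous bahI := by
  apply Continuous.div_const
  exact (Real.continuous_mul_log.comp (continuous_const.add continuous_id)).add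
    (Real.continuous_mul_log.comp (continuous_const.sub continuous_id))

lemma continuous_bahH (β : ℝ) (p : ℕ) : Continuous (bahH β p) :=
  (continuous_const.mul (continuous_pow p)).sub continuous_bahI

lemma bahH_zero {β : ℝ} {p : ℕ} (hp : p ≠ 0) : bahH β p 0 = 0 := by
  simp [bahH, bahI_zero, zero_pow hp]

lemma bahH_exists_max (β : ℝ) (p : ℕ) :
    ∃ m ∈ Icc (-1:ℝ) 1, IsMaxOn (bahH β p) (Icc (-1:ℝ) 1) m ∧
      bahH β p m = sSup (bahH β p '' Icc (-1:ℝ) 1) := by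
  obtain ⟨m, hm, hmax⟩ := isCompact_Icc.exists_isMaxOn
    (⟨0, by norm_num⟩ : (Icc (-1:ℝ) 1).Nonempty) (continuous_bahH β p).continuousOn
  refine ⟨m, hm, hmax, ?_⟩
  symm
  apply IsGreatest.csSup_eq
  refine ⟨⟨m, hm, rfl⟩, ?_⟩
  rintro y ⟨x, hx, rfl⟩
  exact hmax hx


-- the candidate set for betaStar
lemma betaStar_set_facts (p : ℕ) (hp : p ≠ 0) :
    (0:ℝ) ∈ {β' : ℝ | 0 ≤ β' ∧ sSup (bahH β' p '' Icc (-1:ℝ) 1) = 0} ∧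
    BddAbove {β' : ℝ | 0 ≤ β' ∧ sSup (bahH β' p '' Icc (-1:ℝ) 1) = 0} := by
  have himg : ∀ β' : ℝ, BddAbove (bahH β' p '' Icc (-1:ℝ) 1) := fun β' =>
    (isCompact_Icc.image (continuous_bahH β' p)).bddAbove
  constructor
  · refine ⟨le_refl _, ?_⟩
    apply IsGreatest.csSup_eq
    constructor
    · exact ⟨0, by norm_num, bahH_zero hp⟩
    · rintro y ⟨x, hx, rfl⟩
      have := bahI_nonneg hx
      simp only [bahH, zero_mul]
      linarith
  · refine ⟨bahI (1/2) * 2^p, ?_⟩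
    rintro β' ⟨hβ'0, hsup⟩
    have hhalf : bahH β' p (1/2) ≤ 0 := by
      rw [← hsup]
      exact le_csSup (himg β') ⟨1/2, by norm_num, rfl⟩
    have hkey : β' * (1/2:ℝ)^p ≤ bahI (1/2) := by
      simp only [bahH] at hhalf; linarith
    have h2 : ((1/2:ℝ)^p) * 2^p = 1 := by rw [← mul_pow]; norm_num
    calc β' = β' * ((1/2:ℝ)^p * 2^p) := by rw [h2, mul_one]
      _ = (β' * (1/2:ℝ)^p) * 2^p := by ring
      _ ≤ bahI (1/2) * 2^p := mul_le_mul_of_nonneg_right hkey (by positivity)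

lemma betaStar_nonneg (p : ℕ) (hp : p ≠ 0) : 0 ≤ betaStar p := by
  obtain ⟨h0, hbdd⟩ := betaStar_set_facts p hp
  exact le_csSup hbdd h0

lemma sSup_bahH_pos {p : ℕ} (hp : 2 ≤ p) {β : ℝ} (hβ : betaStar p < β) :
    0 < sSup (bahH β p '' Icc (-1:ℝ) 1) := by
  have hp0 : p ≠ 0 := by omega
  obtain ⟨h0S, hbddS⟩ := betaStar_set_facts p hp0
  have hβ0 : 0 ≤ β := le_trans (betaStar_nonneg p hp0) (le_of_lt hβ)
  have himg : BddAbove (bahH β p '' Icc (-1:ℝ) 1) :=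
    (isCompact_Icc.image (continuous_bahH β p)).bddAbove
  have hge : 0 ≤ sSup (bahH β p '' Icc (-1:ℝ) 1) := by
    have := le_csSup himg (⟨0, by norm_num, bahH_zero hp0⟩ :
      (0:ℝ) ∈ bahH β p '' Icc (-1:ℝ) 1)
    linarith
  rcases eq_or_lt_of_le hge with h | h
  · exfalso
    have hmem : β ∈ {β' : ℝ | 0 ≤ β' ∧ sSup (bahH β' p '' Icc (-1:ℝ) 1) = 0} := ⟨hβ0, h.symm⟩
    exact absurd (le_csSup hbddS hmem) (not_le.mpr hβ)
  · exact h


lemma arctanh_eq {x : ℝ} (h1 : -1 < x) (h2 : x < 1) :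
    arctanh x = (Real.log (1 + x) - Real.log (1 - x)) / 2 := by
  rw [arctanh, Real.log_div (by linarith) (by linarith)]

lemma hasDerivAt_bahH (β : ℝ) (p : ℕ) {x : ℝ} (hx1 : -1 < x) (hx2 : x < 1) :
    HasDerivAt (bahH β p) (β * p * x ^ (p - 1) - arctanh x) x := by
  have h1 : HasDerivAt (fun y : ℝ => (1 + y) * Real.log (1 + y))
      ((Real.log (1 + x) + 1) * 1) x := by
    have hin : HasDerivAt (fun y : ℝ => 1 + y) 1 x := (hasDerivAt_id x).const_add 1
    exact (Real.hasDerivAt_mul_log (x := 1 + x) (by linarith)).comp x hin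
  have h2 : HasDerivAt (fun y : ℝ => (1 - y) * Real.log (1 - y))
      ((Real.log (1 - x) + 1) * (-1)) x := by
    have hin : HasDerivAt (fun y : ℝ => 1 - y) (-1) x := (hasDerivAt_id x).const_sub 1
    exact (Real.hasDerivAt_mul_log (x := 1 - x) (by linarith)).comp x hin
  have h3 : HasDerivAt (fun y : ℝ => β * y ^ p) (β * (p * x ^ (p - 1))) x :=
    (hasDerivAt_pow p x).const_mul β
  have h4 := h3.sub (((h1.add h2).div_const 2))
  refine HasDerivAt.congr_deriv h4 ?_
  rw [arctanh_eq hx1 hx2]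
  ring

lemma bahH_one_lt {β : ℝ} (hβ0 : 0 ≤ β) {p : ℕ} (hp : 1 ≤ p) :
    ∃ x0 ∈ Icc (-1:ℝ) 1, bahH β p 1 < bahH β p x0 := by
  set K : ℝ := β * p + 1 with hK
  have hKpos : 0 < K := by positivity
  set x0 : ℝ := max 0 (1 - Real.exp (-(2*K))) with hx0
  have hx00 : 0 ≤ x0 := le_max_left _ _
  have hx01 : x0 < 1 :=
    max_lt one_pos (by linarith [Real.exp_pos (-(2*K))])
  have hx0e : 1 - x0 ≤ Real.exp (-(2*K)) := by
    have : 1 - Real.exp (-(2*K)) ≤ x0 := le_max_right _ _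
    linarith
  obtain ⟨c, hc, hceq⟩ := exists_hasDerivAt_eq_slope (bahH β p)
    (fun x => β * p * x ^ (p - 1) - arctanh x) hx01 (continuous_bahH β p).continuousOn
    (fun x hx => hasDerivAt_bahH β p (by linarith [hx.1]) hx.2)
  obtain ⟨hc1, hc2⟩ := hc
  refine ⟨x0, ⟨by linarith, le_of_lt hx01⟩, ?_⟩
  have hc0 : 0 ≤ c := le_trans hx00 (le_of_lt hc1)
  have hpow : c ^ (p - 1) ≤ 1 := pow_le_one₀ hc0 (le_of_lt hc2)
  have h1 : β * (p:ℝ) * c ^ (p - 1) ≤ β * p := by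
    have hβp : 0 ≤ β * (p:ℝ) := by positivity
    exact mul_le_of_le_one_right hβp hpow
  have harc : K ≤ arctanh c := by
    rw [arctanh_eq (by linarith) hc2]
    have hc1' : (0:ℝ) < 1 - c := by linarith
    have hlog : Real.log (1 - c) ≤ -(2*K) := by
      have hle : 1 - c ≤ Real.exp (-(2*K)) := by linarith
      calc Real.log (1 - c) ≤ Real.log (Real.exp (-(2*K))) := Real.log_le_log hc1' hle
        _ = -(2*K) := Real.log_exp _
    have hlog1 : 0 ≤ Real.log (1 + c) := Real.log_nonneg (by linarith)
    linarith
  have hder : β * p * c ^ (p - 1) - arctanh c ≤ -1 := by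
    rw [hK] at harc; linarith
  have h10 : 0 < 1 - x0 := by linarith
  rw [eq_div_iff (ne_of_gt h10)] at hceq
  nlinarith [mul_le_mul_of_nonneg_right hder (le_of_lt h10)]

lemma bahH_neg_one_lt {β : ℝ} (hβ0 : 0 ≤ β) {p : ℕ} (hp : 1 ≤ p) :
    ∃ x0 ∈ Icc (-1:ℝ) 1, bahH β p (-1) < bahH β p x0 := by
  set K : ℝ := β * p + 1 with hK
  have hKpos : 0 < K := by positivity
  set x0 : ℝ := max 0 (1 - Real.exp (-(2*K))) with hx0
  have hx00 : 0 ≤ x0 := le_max_left _ _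
  have hx01 : x0 < 1 :=
    max_lt one_pos (by linarith [Real.exp_pos (-(2*K))])
  have hx0e : 1 - x0 ≤ Real.exp (-(2*K)) := by
    have : 1 - Real.exp (-(2*K)) ≤ x0 := le_max_right _ _
    linarith
  have hlt : (-1:ℝ) < -x0 := by linarith
  obtain ⟨c, hc, hceq⟩ := exists_hasDerivAt_eq_slope (bahH β p)
    (fun x => β * p * x ^ (p - 1) - arctanh x) hlt (continuous_bahH β p).continuousOn
    (fun x hx => hasDerivAt_bahH β p hx.1 (by linarith [hx.2]))
  obtain ⟨hc1, hc2⟩ := hc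
  refine ⟨-x0, ⟨by linarith, by linarith⟩, ?_⟩
  have hcabs : |c| ≤ 1 := abs_le.mpr ⟨le_of_lt hc1, by linarith⟩
  have hpowabs : |c ^ (p - 1)| ≤ 1 := by
    rw [abs_pow]; exact pow_le_one₀ (abs_nonneg c) hcabs
  have h1 : -(β * (p:ℝ)) ≤ β * (p:ℝ) * c ^ (p - 1) := by
    have hβp : 0 ≤ β * (p:ℝ) := by positivity
    nlinarith [neg_abs_le (c ^ (p-1)), abs_nonneg (c ^ (p-1))]
  have harc : arctanh c ≤ -K := by
    rw [arctanh_eq hc1 (by linarith)]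
    have hc1' : (0:ℝ) < 1 + c := by linarith
    have hlog : Real.log (1 + c) ≤ -(2*K) := by
      have hle : 1 + c ≤ Real.exp (-(2*K)) := by linarith
      calc Real.log (1 + c) ≤ Real.log (Real.exp (-(2*K))) := Real.log_le_log hc1' hle
        _ = -(2*K) := Real.log_exp _
    have hlog1 : 0 ≤ Real.log (1 - c) := Real.log_nonneg (by linarith)
    linarith
  have hder : 1 ≤ β * p * c ^ (p - 1) - arctanh c := by
    rw [hK] at harc; linarith
  have h10 : (0:ℝ) < -x0 - -1 := by linarith
  rw [eq_div_iff (ne_of_gt h10)] at hceq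
  nlinarith [mul_le_mul_of_nonneg_right hder (le_of_lt h10)]

lemma maximizer_eta {p : ℕ} (hp : 2 ≤ p) {β : ℝ} (hβ0 : 0 ≤ β) {x : ℝ}
    (hx : x ∈ Icc (-1:ℝ) 1) (hmax : IsMaxOn (bahH β p) (Icc (-1:ℝ) 1) x)
    (hpos : 0 < bahH β p x) :
    x ∈ Ioo (-1:ℝ) 1 ∧ x ≠ 0 ∧ etaFn p x = β := by
  have hp1 : 1 ≤ p := by omega
  have hp0 : p ≠ 0 := by omega
  have hne1 : x ≠ 1 := by
    rintro rfl
    obtain ⟨x0, hx0, hlt⟩ := bahH_one_lt hβ0 hp1 (β := β)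
    exact absurd (hmax hx0) (not_le.mpr hlt)
  have hne1' : x ≠ -1 := by
    rintro rfl
    obtain ⟨x0, hx0, hlt⟩ := bahH_neg_one_lt hβ0 hp1 (β := β)
    exact absurd (hmax hx0) (not_le.mpr hlt)
  have hIoo : x ∈ Ioo (-1:ℝ) 1 :=
    ⟨lt_of_le_of_ne hx.1 (Ne.symm hne1'), lt_of_le_of_ne hx.2 hne1⟩
  have hx0 : x ≠ 0 := by
    rintro rfl
    rw [bahH_zero hp0] at hpos
    exact lt_irrefl 0 hpos
  have hloc : IsLocalMax (bahH β p) x := hmax.isLocalMax (Icc_mem_nhds hIoo.1 hIoo.2)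
  have hzero : β * p * x ^ (p - 1) - arctanh x = 0 :=
    hloc.hasDerivAt_eq_zero (hasDerivAt_bahH β p hIoo.1 hIoo.2)
  refine ⟨hIoo, hx0, ?_⟩
  have hparc : arctanh x = β * p * x ^ (p - 1) := by linarith
  have hcast : x ^ (p - 1) = x ^ ((p:ℤ) - 1) := by
    rw [← zpow_natCast]
    congr 1
    omega
  have hz : x ^ (1 - (p:ℤ)) * x ^ ((p:ℤ) - 1) = 1 := by
    rw [← zpow_add₀ hx0]
    norm_num
  have hpne : (p:ℝ) ≠ 0 := Nat.cast_ne_zero.mpr hp0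
  rw [etaFn, if_neg hx0, hparc, hcast]
  calc (p:ℝ)⁻¹ * x ^ (1 - (p:ℤ)) * (β * p * x ^ ((p:ℤ) - 1))
      = β * ((p:ℝ)⁻¹ * p) * (x ^ (1 - (p:ℤ)) * x ^ ((p:ℤ) - 1)) := by ring
    _ = β := by rw [hz, inv_mul_cancel₀ hpne]; ring


lemma etaFn_continuousAt {p : ℕ} {x : ℝ} (hx0 : x ≠ 0) (hx : x ∈ Ioo (-1:ℝ) 1) :
    ContinuousAt (etaFn p) x := by
  have harg : (1 + x) / (1 - x) ≠ 0 := by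
    apply div_ne_zero <;> [skip; skip] <;> [linarith [hx.1]; linarith [hx.2]]
  have harctanh : ContinuousAt arctanh x := by
    unfold arctanh
    apply ContinuousAt.div_const
    have hinner : ContinuousAt (fun t : ℝ => (1 + t) / (1 - t)) x :=
      (continuousAt_const.add continuousAt_id).div
        (continuousAt_const.sub continuousAt_id) (by linarith [hx.2])
    exact ContinuousAt.comp (f := fun t : ℝ => (1 + t) / (1 - t))
      (Real.continuousAt_log harg) hinner
  have hmain : ContinuousAt (fun t : ℝ => (p:ℝ)⁻¹ * t ^ (1 - (p:ℤ)) * arctanh t) x :=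
    (continuousAt_const.mul (continuousAt_zpow₀ x _ (Or.inl hx0))).mul harctanh
  apply hmain.congr
  filter_upwards [isOpen_compl_singleton.mem_nhds hx0] with t ht
  simp only [etaFn, if_neg (by exact ht : t ≠ 0)]

lemma exists_sep {p : ℕ} (hp : 2 ≤ p) {β : ℝ} (hβ : betaStar p < β) {ε : ℝ} (hε : 0 < ε) :
    ∃ m ∈ Ioo (-1:ℝ) 1, ∃ S : ℝ, S < bahH β p m ∧
      (∀ x ∈ Icc (-1:ℝ) 1, ε < |etaFn p x - β| → bahH β p x ≤ S) := by
  have hp0 : p ≠ 0 := by omega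
  obtain ⟨m, hm, hmax, hsup⟩ := bahH_exists_max β p
  have hβ0 : 0 ≤ β := le_trans (betaStar_nonneg p hp0) (le_of_lt hβ)
  have hMpos : 0 < bahH β p m := by rw [hsup]; exact sSup_bahH_pos hp hβ
  obtain ⟨hmIoo, hm0, hmeta⟩ := maximizer_eta hp hβ0 hm hmax hMpos
  set B := {x : ℝ | x ∈ Icc (-1:ℝ) 1 ∧ ε < |etaFn p x - β|} with hB
  by_cases hcl : (closure B).Nonempty
  · have hBsub : closure B ⊆ Icc (-1:ℝ) 1 :=
      closure_minimal (fun x hx => hx.1) isClosed_Icc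
    have hcomp : IsCompact (closure B) :=
      isCompact_Icc.of_isClosed_subset isClosed_closure hBsub
    obtain ⟨m', hm', hmax'⟩ := hcomp.exists_isMaxOn hcl (continuous_bahH β p).continuousOn
    refine ⟨m, hmIoo, bahH β p m', ?_, ?_⟩
    · have hle : bahH β p m' ≤ bahH β p m := hmax (hBsub hm')
      rcases lt_or_eq_of_le hle with h | h
      · exact h
      · exfalso
        have hmax'' : IsMaxOn (bahH β p) (Icc (-1:ℝ) 1) m' := by
          intro x hx
          calc bahH β p x ≤ bahH β p m := hmax hx
            _ = bahH β p m' := h.symm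
        have hpos' : 0 < bahH β p m' := by rw [h]; exact hMpos
        obtain ⟨hIoo', h0', heta'⟩ := maximizer_eta hp hβ0 (hBsub hm') hmax'' hpos'
        have hcont : ContinuousAt (etaFn p) m' := etaFn_continuousAt h0' hIoo'
        have hev : {t : ℝ | |etaFn p t - β| < ε} ∈ nhds m' := by
          have htd : Tendsto (etaFn p) (nhds m') (nhds β) := by
            rw [← heta']; exact hcont
          have := htd (Metric.ball_mem_nhds β hε)
          filter_upwards [this] with t ht
          simpa [Real.dist_eq] using ht
        rw [mem_closure_iff_nhds] at hm'
        obtain ⟨t, ht1, ht2⟩ := hm' _ hev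
        exact absurd ht2.2 (not_lt.mpr (le_of_lt ht1))
    · intro x hx hbad
      exact hmax' (subset_closure ⟨hx, hbad⟩)
  · refine ⟨m, hmIoo, bahH β p m - 1, by linarith, ?_⟩
    intro x hx hbad
    exact absurd ⟨x, subset_closure ⟨hx, hbad⟩⟩ hcl


lemma spin_sum {n : ℕ} (σ : Fin n → Bool) :
    ∑ i, spin (σ i) = 2 * ((Finset.univ.filter (fun i => σ i = true)).card : ℝ) - n := by
  classical
  have hsplit := Finset.sum_filter_add_sum_filter_not Finset.univ
    (fun i => σ i = true) (fun i => spin (σ i))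
  have h1 : ∑ i ∈ Finset.univ.filter (fun i => σ i = true), spin (σ i)
      = ((Finset.univ.filter (fun i => σ i = true)).card : ℝ) := by
    have hone : ∀ i ∈ Finset.univ.filter (fun i => σ i = true), spin (σ i) = 1 := by
      intro i hi
      simp [spin, (Finset.mem_filter.mp hi).2]
    rw [Finset.sum_congr rfl hone, Finset.sum_const, nsmul_eq_mul, mul_one]
  have h2 : ∑ i ∈ Finset.univ.filter (fun i => ¬(σ i = true)), spin (σ i)
      = -((Finset.univ.filter (fun i => ¬(σ i = true))).card : ℝ) := by
    have hneg : ∀ i ∈ Finset.univ.filter (fun i => ¬(σ i = true)), spin (σ i) = -1 := by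
      intro i hi
      have := (Finset.mem_filter.mp hi).2
      simp only [Bool.not_eq_true] at this
      simp [spin, this]
    rw [Finset.sum_congr rfl hneg, Finset.sum_const, nsmul_eq_mul, mul_neg_one]
  have hcard : (Finset.univ.filter (fun i => σ i = true)).card
      + (Finset.univ.filter (fun i => ¬(σ i = true))).card = n := by
    rw [Finset.card_filter_add_card_filter_not, Finset.card_univ, Fintype.card_fin]
  have hcard' : ((Finset.univ.filter (fun i => ¬(σ i = true))).card : ℝ)
      = (n : ℝ) - ((Finset.univ.filter (fun i => σ i = true)).card : ℝ) := by
    have := congrArg (fun k : ℕ => (k : ℝ)) hcard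
    push_cast at this
    linarith
  rw [← hsplit, h1, h2, hcard']
  ring

lemma sum_config (n : ℕ) (F : ℝ → ℝ) :
    ∑ σ : Fin n → Bool, F (∑ i, spin (σ i))
      = ∑ k ∈ Finset.range (n+1), (n.choose k : ℝ) * F (2*(k:ℝ) - n) := by
  classical
  let e : (Fin n → Bool) ≃ Finset (Fin n) :=
    { toFun := fun σ => Finset.univ.filter (fun i => σ i = true)
      invFun := fun s i => decide (i ∈ s)
      left_inv := fun σ => by
        funext i
        by_cases h : σ i = true <;> simp [h]
      right_inv := fun s => by
        ext i
        simp }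
  have h1 : ∑ σ : Fin n → Bool, F (∑ i, spin (σ i))
      = ∑ s : Finset (Fin n), F (2*(s.card:ℝ) - n) := by
    apply Fintype.sum_equiv e
    intro σ
    rw [spin_sum]
    rfl
  rw [h1]
  calc ∑ s : Finset (Fin n), F (2*(s.card:ℝ) - n)
      = ∑ s ∈ (Finset.univ : Finset (Fin n)).powerset, F (2*(s.card:ℝ) - n) := by
        rw [Finset.powerset_univ]
    _ = ∑ k ∈ Finset.range ((Finset.univ : Finset (Fin n)).card + 1),
          ∑ s ∈ Finset.powersetCard k (Finset.univ : Finset (Fin n)), F (2*(s.card:ℝ) - n) :=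
        Finset.sum_powerset _ _
    _ = ∑ k ∈ Finset.range (n+1), (n.choose k : ℝ) * F (2*(k:ℝ) - n) := by
        simp only [Finset.card_univ, Fintype.card_fin]
        refine Finset.sum_congr rfl (fun k _ => ?_)
        have := Finset.sum_powersetCard k (Finset.univ : Finset (Fin n))
          (fun j => F (2*(j:ℝ) - n))
        simp only [Finset.card_univ, Fintype.card_fin] at this
        rw [this, nsmul_eq_mul]


lemma pow_mul_pow_eq {n k : ℕ} (hn : 0 < n) (hk : k ≤ n) :
    ((k:ℝ)/n)^k * (((n:ℝ)-k)/n)^(n-k)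
      = Real.exp ((n:ℝ) * (bahI ((2*(k:ℝ) - n)/n) - Real.log 2)) := by
  have hn0 : (n:ℝ) ≠ 0 := Nat.cast_ne_zero.mpr hn.ne'
  have hnpos : (0:ℝ) < n := by exact_mod_cast hn
  rcases Nat.eq_zero_or_pos k with rfl | hkpos
  · have hx : (2*((0:ℕ):ℝ) - n)/n = -1 := by
      push_cast
      field_simp
      ring
    rw [hx]
    have hI : bahI (-1) = Real.log 2 := by
      norm_num [bahI]
    rw [hI]
    simp [hn0]
  rcases eq_or_lt_of_le hk with rfl | hlt
  · have hx : (2*((k:ℕ):ℝ) - k)/k = 1 := by field_simp; ring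
    rw [hx]
    have hI : bahI 1 = Real.log 2 := by
      norm_num [bahI]
    rw [hI]
    simp [hn0]
  · -- 0 < k < n
    have hkr : (0:ℝ) < k := by exact_mod_cast hkpos
    have hkn : (k:ℝ) < n := by exact_mod_cast hlt
    have hq : (0:ℝ) < (k:ℝ)/n := by positivity
    have hq1 : (0:ℝ) < ((n:ℝ)-k)/n := div_pos (by linarith) hnpos
    rw [← Real.exp_log hq, ← Real.exp_log hq1, ← Real.exp_nat_mul, ← Real.exp_nat_mul,
      ← Real.exp_add]
    congr 1
    have hcast : ((n - k : ℕ) : ℝ) = (n:ℝ) - k := by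
      push_cast [Nat.cast_sub hk]; ring
    rw [hcast]
    have h1x : 1 + (2*(k:ℝ) - n)/n = 2*((k:ℝ)/n) := by field_simp; ring
    have h2x : 1 - (2*(k:ℝ) - n)/n = 2*(((n:ℝ)-k)/n) := by field_simp; ring
    rw [bahI, h1x, h2x, Real.log_mul two_ne_zero hq.ne', Real.log_mul two_ne_zero hq1.ne']
    field_simp
    ring

lemma binom_sum_eq {q : ℝ} (n : ℕ) :
    ∑ j ∈ Finset.range (n+1), (n.choose j : ℝ) * q^j * (1-q)^(n-j) = 1 := by
  have h := add_pow q (1-q) n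
  rw [show q + (1 - q) = 1 by ring, one_pow] at h
  calc ∑ j ∈ Finset.range (n+1), (n.choose j : ℝ) * q^j * (1-q)^(n-j)
      = ∑ j ∈ Finset.range (n+1), q^j * (1-q)^(n-j) * (n.choose j : ℝ) :=
        Finset.sum_congr rfl (fun j _ => by ring)
    _ = 1 := h.symm

lemma max_term {n k : ℕ} (hn : 0 < n) (hk : k ≤ n) :
    ∀ j ≤ n, (n.choose j : ℝ) * ((k:ℝ)/n)^j * (1-(k:ℝ)/n)^(n-j)
      ≤ (n.choose k : ℝ) * ((k:ℝ)/n)^k * (1-(k:ℝ)/n)^(n-k) := by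
  have hn0 : (n:ℝ) ≠ 0 := Nat.cast_ne_zero.mpr hn.ne'
  have hnpos : (0:ℝ) < n := by exact_mod_cast hn
  have hkn : (k:ℝ) ≤ n := Nat.cast_le.mpr hk
  set q : ℝ := (k:ℝ)/n with hqdef
  set t : ℕ → ℝ := fun j => (n.choose j : ℝ) * q^j * (1-q)^(n-j) with ht
  have hq0 : 0 ≤ q := by positivity
  have h1qeq : 1 - q = ((n:ℝ)-k)/n := by rw [hqdef]; field_simp
  have h1q : 0 ≤ 1 - q := by rw [h1qeq]; apply div_nonneg (by linarith) (le_of_lt hnpos)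
  have stepup : ∀ j, j + 1 ≤ k → t j ≤ t (j+1) := by
    intro j hj
    have hnat : n.choose j * (n - k) ≤ n.choose (j+1) * k := by
      have h1 : (n - k) * (j+1) ≤ (n - j) * k :=
        le_trans (Nat.mul_le_mul_left _ hj) (Nat.mul_le_mul_right _ (Nat.sub_le_sub_left (by omega) n))
      have hid := Nat.choose_succ_right_eq n j
      have h3 : n.choose j * ((n-j)*k) = n.choose (j+1) * k * (j+1) := by
        calc n.choose j * ((n-j)*k) = (n.choose j * (n-j)) * k := by ring
          _ = (n.choose (j+1) * (j+1)) * k := by rw [hid]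
          _ = n.choose (j+1) * k * (j+1) := by ring
      apply Nat.le_of_mul_le_mul_right _ (Nat.succ_pos j)
      calc n.choose j * (n-k) * (j+1) = n.choose j * ((n-k)*(j+1)) := by ring
        _ ≤ n.choose j * ((n-j)*k) := Nat.mul_le_mul_left _ h1
        _ = n.choose (j+1) * k * (j+1) := h3
    have hreal0 : (n.choose j : ℝ) * ((n:ℝ) - k) ≤ (n.choose (j+1):ℝ) * k := by
      have := (Nat.cast_le (α := ℝ)).mpr hnat
      push_cast [Nat.cast_sub hk] at this
      linarith
    have hreal : (n.choose j : ℝ) * (1-q) ≤ (n.choose (j+1) : ℝ) * q := by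
      rw [h1qeq, hqdef, ← mul_div_assoc, ← mul_div_assoc, div_le_div_iff₀ hnpos hnpos]
      exact mul_le_mul_of_nonneg_right hreal0 hnpos.le
    have hsub : n - j = (n - (j+1)) + 1 := by omega
    have e1 : t j = ((n.choose j:ℝ)*(1-q)) * (q^j * (1-q)^(n-(j+1))) := by
      rw [ht]; dsimp only; rw [hsub, pow_succ]; ring
    have e2 : t (j+1) = ((n.choose (j+1):ℝ)*q) * (q^j * (1-q)^(n-(j+1))) := by
      rw [ht]; dsimp only; rw [pow_succ]; ring
    rw [e1, e2]
    exact mul_le_mul_of_nonneg_right hreal (by positivity)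
  have stepdown : ∀ j, k ≤ j → j < n → t (j+1) ≤ t j := by
    intro j hjk hjn
    have hnat : n.choose (j+1) * k ≤ n.choose j * (n - k) := by
      have h1 : (n - j) * k ≤ (n - k) * (j+1) :=
        le_trans (Nat.mul_le_mul_right _ (Nat.sub_le_sub_left hjk n))
          (Nat.mul_le_mul_left _ (by omega))
      have hid := Nat.choose_succ_right_eq n j
      have h3 : n.choose (j+1) * k * (j+1) = n.choose j * ((n-j)*k) := by
        calc n.choose (j+1) * k * (j+1) = (n.choose (j+1) * (j+1)) * k := by ring
          _ = (n.choose j * (n-j)) * k := by rw [hid]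
          _ = n.choose j * ((n-j)*k) := by ring
      apply Nat.le_of_mul_le_mul_right _ (Nat.succ_pos j)
      calc n.choose (j+1) * k * (j+1) = n.choose j * ((n-j)*k) := h3
        _ ≤ n.choose j * ((n-k)*(j+1)) := Nat.mul_le_mul_left _ h1
        _ = n.choose j * (n-k) * (j+1) := by ring
    have hreal0 : (n.choose (j+1):ℝ) * k ≤ (n.choose j : ℝ) * ((n:ℝ) - k) := by
      have := (Nat.cast_le (α := ℝ)).mpr hnat
      push_cast [Nat.cast_sub hk] at this
      linarith
    have hreal : (n.choose (j+1) : ℝ) * q ≤ (n.choose j : ℝ) * (1-q) := by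
      rw [h1qeq, hqdef, ← mul_div_assoc, ← mul_div_assoc, div_le_div_iff₀ hnpos hnpos]
      exact mul_le_mul_of_nonneg_right hreal0 hnpos.le
    have hsub : n - j = (n - (j+1)) + 1 := by omega
    have e1 : t j = ((n.choose j:ℝ)*(1-q)) * (q^j * (1-q)^(n-(j+1))) := by
      rw [ht]; dsimp only; rw [hsub, pow_succ]; ring
    have e2 : t (j+1) = ((n.choose (j+1):ℝ)*q) * (q^j * (1-q)^(n-(j+1))) := by
      rw [ht]; dsimp only; rw [pow_succ]; ring
    rw [e1, e2]
    exact mul_le_mul_of_nonneg_right hreal (by positivity)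
  have up : ∀ d, d ≤ k → t (k - d) ≤ t k := by
    intro d
    induction d with
    | zero => intro _; simp
    | succ d ih =>
      intro hd
      have hstep : t (k - (d+1)) ≤ t (k - d) := by
        have heq : (k - (d+1)) + 1 = k - d := by omega
        have := stepup (k - (d+1)) (by omega)
        rwa [heq] at this
      exact le_trans hstep (ih (by omega))
  have down : ∀ d, k + d ≤ n → t (k + d) ≤ t k := by
    intro d
    induction d with
    | zero => intro _; simp
    | succ d ih =>
      intro hd
      have hstep : t (k + (d+1)) ≤ t (k + d) := by
        have := stepdown (k + d) (by omega) (by omega)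
        rwa [show k + d + 1 = k + (d+1) by omega] at this
      exact le_trans hstep (ih (by omega))
  intro j hj
  rcases le_total j k with h | h
  · have := up (k - j) (by omega)
    rwa [show k - (k - j) = j by omega] at this
  · have := down (j - k) (by omega)
    rwa [show k + (j - k) = j by omega] at this

lemma choose_le_exp {n k : ℕ} (hn : 0 < n) (hk : k ≤ n) :
    (n.choose k : ℝ) ≤ Real.exp ((n:ℝ) * (Real.log 2 - bahI ((2*(k:ℝ) - n)/n))) := by
  have hn0 : (n:ℝ) ≠ 0 := Nat.cast_ne_zero.mpr hn.ne'
  have hnpos : (0:ℝ) < n := by exact_mod_cast hn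
  set q : ℝ := (k:ℝ)/n with hqdef
  have h1qeq : 1 - q = ((n:ℝ)-k)/n := by rw [hqdef]; field_simp
  have hq0 : 0 ≤ q := by positivity
  have h1q : 0 ≤ 1 - q := by
    rw [h1qeq]
    apply div_nonneg _ (le_of_lt hnpos)
    have : (k:ℝ) ≤ n := Nat.cast_le.mpr hk
    linarith
  have hterm : (n.choose k:ℝ) * q^k * (1-q)^(n-k) ≤ 1 := by
    calc (n.choose k:ℝ) * q^k * (1-q)^(n-k)
        ≤ ∑ j ∈ Finset.range (n+1), (n.choose j:ℝ) * q^j * (1-q)^(n-j) :=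
          Finset.single_le_sum (f := fun j => (n.choose j:ℝ) * q^j * (1-q)^(n-j))
            (fun j _ => by positivity) (Finset.mem_range.mpr (by omega))
      _ = 1 := binom_sum_eq n
  have hE : q^k * (1-q)^(n-k)
      = Real.exp ((n:ℝ) * (bahI ((2*(k:ℝ) - n)/n) - Real.log 2)) := by
    rw [h1qeq, hqdef]
    exact pow_mul_pow_eq hn hk
  have hEpos : (0:ℝ) < Real.exp ((n:ℝ) * (bahI ((2*(k:ℝ) - n)/n) - Real.log 2)) :=
    Real.exp_pos _
  rw [show (n:ℝ) * (Real.log 2 - bahI ((2*(k:ℝ) - n)/n))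
      = -((n:ℝ) * (bahI ((2*(k:ℝ) - n)/n) - Real.log 2)) by ring, Real.exp_neg,
    inv_eq_one_div, le_div_iff₀ hEpos]
  calc (n.choose k:ℝ) * Real.exp ((n:ℝ) * (bahI ((2*(k:ℝ) - n)/n) - Real.log 2))
      = (n.choose k:ℝ) * (q^k * (1-q)^(n-k)) := by rw [hE]
    _ = (n.choose k:ℝ) * q^k * (1-q)^(n-k) := by ring
    _ ≤ 1 := hterm

lemma exp_le_choose {n k : ℕ} (hn : 0 < n) (hk : k ≤ n) :
    Real.exp ((n:ℝ) * (Real.log 2 - bahI ((2*(k:ℝ) - n)/n))) ≤ ((n:ℝ)+1) * (n.choose k) := by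
  have hn0 : (n:ℝ) ≠ 0 := Nat.cast_ne_zero.mpr hn.ne'
  have hnpos : (0:ℝ) < n := by exact_mod_cast hn
  set q : ℝ := (k:ℝ)/n with hqdef
  have h1qeq : 1 - q = ((n:ℝ)-k)/n := by rw [hqdef]; field_simp
  have hone : 1 ≤ ((n:ℝ)+1) * ((n.choose k:ℝ) * q^k * (1-q)^(n-k)) := by
    calc (1:ℝ) = ∑ j ∈ Finset.range (n+1), (n.choose j:ℝ) * q^j * (1-q)^(n-j) :=
          (binom_sum_eq n).symm
      _
        ≤ ∑ _j ∈ Finset.range (n+1), (n.choose k:ℝ) * q^k * (1-q)^(n-k) :=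
          Finset.sum_le_sum (fun j hj =>
            max_term hn hk j (Nat.lt_succ_iff.mp (Finset.mem_range.mp hj)))
      _ = ((n:ℝ)+1) * ((n.choose k:ℝ) * q^k * (1-q)^(n-k)) := by
          rw [Finset.sum_const, Finset.card_range, nsmul_eq_mul]
          push_cast
          ring
  have hE : q^k * (1-q)^(n-k)
      = Real.exp ((n:ℝ) * (bahI ((2*(k:ℝ) - n)/n) - Real.log 2)) := by
    rw [h1qeq, hqdef]
    exact pow_mul_pow_eq hn hk
  have hEpos : (0:ℝ) < Real.exp ((n:ℝ) * (bahI ((2*(k:ℝ) - n)/n) - Real.log 2)) :=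
    Real.exp_pos _
  rw [show (n:ℝ) * (Real.log 2 - bahI ((2*(k:ℝ) - n)/n))
      = -((n:ℝ) * (bahI ((2*(k:ℝ) - n)/n) - Real.log 2)) by ring, Real.exp_neg,
    inv_eq_one_div, div_le_iff₀ hEpos]
  calc (1:ℝ) ≤ ((n:ℝ)+1) * ((n.choose k:ℝ) * q^k * (1-q)^(n-k)) := hone
    _ = ((n:ℝ)+1) * (n.choose k:ℝ)
        * Real.exp ((n:ℝ) * (bahI ((2*(k:ℝ) - n)/n) - Real.log 2)) := by
      rw [← hE]; ring


lemma tendsto_aux {c : ℝ} (hc : 0 < c) :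
    Tendsto (fun n : ℕ => ((n:ℝ)+1)^2 * Real.exp (-(c*n))) atTop (nhds 0) := by
  have h2 := tendsto_pow_mul_exp_neg_atTop_nhds_zero 2
  have h1 := tendsto_pow_mul_exp_neg_atTop_nhds_zero 1
  have h0 := tendsto_pow_mul_exp_neg_atTop_nhds_zero 0
  have hbig : Tendsto (fun x : ℝ => (x/c+1)^2 * Real.exp (-x)) atTop (nhds 0) := by
    have hsum := ((h2.const_mul ((1:ℝ)/c^2)).add (h1.const_mul ((2:ℝ)/c))).add h0
    simp only [mul_zero, add_zero] at hsum
    apply Tendsto.congr ?_ hsum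
    intro x
    have hc2 : c^2 ≠ 0 := by positivity
    field_simp
    ring
  have hcomp : Tendsto (fun n : ℕ => c*(n:ℝ)) atTop atTop :=
    (tendsto_natCast_atTop_atTop).const_mul_atTop hc
  have htot := hbig.comp hcomp
  apply Tendsto.congr ?_ htot
  intro n
  simp only [Function.comp_apply]
  rw [mul_comm c (n:ℝ), mul_div_assoc, div_self hc.ne', mul_one, mul_comm (n:ℝ) c]

/-- For `p ≥ 2` and `β > β*(p)`, the MPL estimator `η_p(X̄_n)` is consistent under the
`p`-tensor Curie–Weiss model `P_{β,p}`: for every `ε > 0`,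
`P_{β,p}(|η_p(X̄_n) − β| > ε) → 0` as `n → ∞`. -/
theorem statement17 (p : ℕ) (hp : 2 ≤ p) (β : ℝ) (hβ : betaStar p < β) :
    ∀ ε > (0 : ℝ),
      Tendsto (fun n : ℕ =>
          cwProb β p n {σ : Fin n → Bool | ε < |etaFn p (mag σ) - β|})
        atTop (nhds 0) := by
  intro ε hε
  obtain ⟨m, hmIoo, S, hSlt, hsep⟩ := exists_sep hp hβ hε
  set c : ℝ := (bahH β p m - S)/2 with hc
  have hcpos : 0 < c := by rw [hc]; linarith
  have hm1 : (0:ℝ) < 1 + m := by linarith [hmIoo.1]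
  have hm2 : 1 + m ≤ 2 := by linarith [hmIoo.2]
  set xs : ℕ → ℝ := fun n => (2*((⌊(n:ℝ)*(1+m)/2⌋₊ : ℕ):ℝ) - n)/n with hxs
  -- xs n → m
  have hxbounds : ∀ n : ℕ, 1 ≤ n → m - 2/(n:ℝ) ≤ xs n ∧ xs n ≤ m := by
    intro n hn
    have hn0 : (0:ℝ) < n := by exact_mod_cast hn
    have ha : (0:ℝ) ≤ (n:ℝ)*(1+m)/2 := by positivity
    have hfl1 : ((⌊(n:ℝ)*(1+m)/2⌋₊:ℕ):ℝ) ≤ (n:ℝ)*(1+m)/2 := Nat.floor_le ha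
    have hfl2 : (n:ℝ)*(1+m)/2 - 1 < ((⌊(n:ℝ)*(1+m)/2⌋₊:ℕ):ℝ) := Nat.sub_one_lt_floor _
    constructor
    · rw [hxs]
      rw [le_div_iff₀ hn0]
      have : (m - 2/(n:ℝ)) * n = m*n - 2 := by field_simp
      rw [this]
      nlinarith
    · rw [hxs, div_le_iff₀ hn0]
      nlinarith
  have hxtend : Tendsto xs atTop (nhds m) := by
    have hlow : Tendsto (fun n : ℕ => m - 2/(n:ℝ)) atTop (nhds m) := by
      have := tendsto_const_div_atTop_nhds_zero_nat (2:ℝ)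
      have := tendsto_const_nhds (x := m) (f := atTop (α := ℕ)).sub this
      simpa using this
    apply tendsto_of_tendsto_of_tendsto_of_le_of_le' hlow tendsto_const_nhds
    · filter_upwards [eventually_ge_atTop 1] with n hn
      exact (hxbounds n hn).1
    · filter_upwards [eventually_ge_atTop 1] with n hn
      exact (hxbounds n hn).2
  have hHtend : Tendsto (fun n => bahH β p (xs n)) atTop (nhds (bahH β p m)) :=
    ((continuous_bahH β p).continuousAt).tendsto.comp hxtend
  have hev1 : ∀ᶠ n : ℕ in atTop, S + c < bahH β p (xs n) :=
    hHtend.eventually (eventually_gt_nhds (by rw [hc]; linarith))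
  -- squeeze
  apply squeeze_zero' (g := fun n : ℕ => ((n:ℝ)+1)^2 * Real.exp (-(c*(n:ℝ))))
  · filter_upwards with n
    apply div_nonneg
    · exact Finset.sum_nonneg fun σ _ =>
        Set.indicator_nonneg (fun σ _ => le_of_lt (Real.exp_pos _)) σ
    · exact Finset.sum_nonneg fun σ _ => le_of_lt (Real.exp_pos _)
  · filter_upwards [hev1, eventually_ge_atTop 1] with n hgood hn1
    -- main estimate
    have hn0 : (0:ℝ) < n := by exact_mod_cast hn1
    have hnne : (n:ℝ) ≠ 0 := ne_of_gt hn0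
    have hnpos : 0 < n := hn1
    set kn : ℕ := ⌊(n:ℝ)*(1+m)/2⌋₊ with hkn
    have hknn : kn ≤ n := by
      have h1 : (n:ℝ)*(1+m)/2 ≤ (n:ℝ) := by nlinarith
      have := Nat.floor_le_floor (R := ℝ) h1
      rwa [Nat.floor_natCast] at this
    -- exponent simplification
    have hexp : ∀ k : ℕ, k ≤ n →
        β * (n:ℝ)^(1-(p:ℤ)) * (2*(k:ℝ)-n)^p = (n:ℝ) * (β * ((2*(k:ℝ)-n)/n)^p) := by
      intro k hk
      set x : ℝ := (2*(k:ℝ)-n)/n with hxdef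
      have hnx : 2*(k:ℝ)-n = n * x := by rw [hxdef]; field_simp
      rw [hnx, mul_pow]
      have hnp : (n:ℝ)^(p:ℕ) = (n:ℝ)^(p:ℤ) := (zpow_natCast _ p).symm
      rw [hnp]
      have hzz : (n:ℝ)^(1-(p:ℤ)) * (n:ℝ)^(p:ℤ) = (n:ℝ) := by
        rw [← zpow_add₀ hnne]
        norm_num
      calc β * (n:ℝ)^(1-(p:ℤ)) * ((n:ℝ)^(p:ℤ) * x^p)
          = β * ((n:ℝ)^(1-(p:ℤ)) * (n:ℝ)^(p:ℤ)) * x^p := by ring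
        _ = (n:ℝ) * (β * x^p) := by rw [hzz]; ring
    -- numerator bound
    set E : Set (Fin n → Bool) := {σ : Fin n → Bool | ε < |etaFn p (mag σ) - β|} with hE
    set G : ℝ → ℝ := fun s => if ε < |etaFn p (s/(n:ℝ)) - β|
        then Real.exp (β * (n:ℝ)^(1-(p:ℤ)) * s^p) else 0 with hG
    have hGind : ∀ σ : Fin n → Bool, E.indicator (cwWeight β p n) σ = G (∑ i, spin (σ i)) := by
      intro σ
      rw [Set.indicator_apply]
      simp only [hE, hG, Set.mem_setOf_eq, mag, cwWeight]
    have hnum : (∑ σ : Fin n → Bool, E.indicator (cwWeight β p n) σ)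
        ≤ ((n:ℝ)+1) * Real.exp ((n:ℝ) * (Real.log 2 + S)) := by
      calc ∑ σ : Fin n → Bool, E.indicator (cwWeight β p n) σ
          = ∑ σ : Fin n → Bool, G (∑ i, spin (σ i)) :=
            Finset.sum_congr rfl (fun σ _ => hGind σ)
        _ = ∑ k ∈ Finset.range (n+1), (n.choose k:ℝ) * G (2*(k:ℝ) - n) := sum_config n G
        _ ≤ ∑ _k ∈ Finset.range (n+1), Real.exp ((n:ℝ)*(Real.log 2 + S)) := ?_
        _ = ((n:ℝ)+1) * Real.exp ((n:ℝ)*(Real.log 2 + S)) := by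
            rw [Finset.sum_const, Finset.card_range, nsmul_eq_mul]
            push_cast
            ring
      apply Finset.sum_le_sum
      intro k hkmem
      have hk : k ≤ n := Nat.lt_succ_iff.mp (Finset.mem_range.mp hkmem)
      rw [hG]
      dsimp only
      split_ifs with hbad
      · set x : ℝ := (2*(k:ℝ)-n)/n with hxdef
        have hxIcc : x ∈ Icc (-1:ℝ) 1 := by
          constructor
          · rw [hxdef, le_div_iff₀ hn0]
            have : (0:ℝ) ≤ k := Nat.cast_nonneg k
            nlinarith
          · rw [hxdef, div_le_one hn0]
            have : (k:ℝ) ≤ n := Nat.cast_le.mpr hk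
            linarith
        have hxS : bahH β p x ≤ S := hsep x hxIcc hbad
        calc (n.choose k:ℝ) * Real.exp (β*(n:ℝ)^(1-(p:ℤ))*(2*(k:ℝ)-n)^p)
            ≤ Real.exp ((n:ℝ)*(Real.log 2 - bahI x)) * Real.exp ((n:ℝ)*(β * x^p)) := by
              apply mul_le_mul (choose_le_exp hnpos hk) (le_of_eq ?_)
                (le_of_lt (Real.exp_pos _)) (le_of_lt (Real.exp_pos _))
              rw [hexp k hk]
          _ = Real.exp ((n:ℝ)*(Real.log 2 + bahH β p x)) := by
              rw [← Real.exp_add]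
              congr 1
              rw [bahH]
              ring
          _ ≤ Real.exp ((n:ℝ)*(Real.log 2 + S)) := by
              apply Real.exp_le_exp.mpr
              apply mul_le_mul_of_nonneg_left _ hn0.le
              linarith
      · rw [mul_zero]
        positivity
    -- denominator bound
    have hden : Real.exp ((n:ℝ)*(Real.log 2 + bahH β p (xs n))) / ((n:ℝ)+1)
        ≤ ∑ σ : Fin n → Bool, cwWeight β p n σ := by
      have hsum : ∑ σ : Fin n → Bool, cwWeight β p n σ
          = ∑ k ∈ Finset.range (n+1), (n.choose k:ℝ)
              * Real.exp (β*(n:ℝ)^(1-(p:ℤ))*(2*(k:ℝ)-n)^p) :=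
        sum_config n (fun s => Real.exp (β*(n:ℝ)^(1-(p:ℤ))*s^p))
      rw [hsum]
      have hxsn : xs n = (2*((kn:ℕ):ℝ)-n)/n := by rw [hxs, hkn]
      have hterm : Real.exp ((n:ℝ)*(Real.log 2 + bahH β p (xs n))) / ((n:ℝ)+1)
          ≤ (n.choose kn:ℝ) * Real.exp (β*(n:ℝ)^(1-(p:ℤ))*(2*((kn:ℕ):ℝ)-n)^p) := by
        rw [hexp kn hknn]
        have hsplit : Real.exp ((n:ℝ)*(Real.log 2 + bahH β p (xs n)))
            = Real.exp ((n:ℝ)*(Real.log 2 - bahI (xs n)))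
              * Real.exp ((n:ℝ)*(β*(xs n)^p)) := by
          rw [← Real.exp_add]
          congr 1
          rw [bahH]
          ring
        rw [hsplit, hxsn]
        rw [mul_div_right_comm]
        apply mul_le_mul _ (le_refl _) (le_of_lt (Real.exp_pos _)) (Nat.cast_nonneg _)
        rw [div_le_iff₀ (by positivity : (0:ℝ) < (n:ℝ)+1)]
        calc Real.exp ((n:ℝ)*(Real.log 2 - bahI ((2*((kn:ℕ):ℝ)-n)/n)))
            ≤ ((n:ℝ)+1) * (n.choose kn:ℝ) := exp_le_choose hnpos hknn
          _ = (n.choose kn:ℝ) * ((n:ℝ)+1) := by ring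
      refine le_trans hterm (Finset.single_le_sum
        (f := fun k => (n.choose k:ℝ) * Real.exp (β*(n:ℝ)^(1-(p:ℤ))*(2*(k:ℝ)-n)^p))
        (fun k _ => by positivity) (Finset.mem_range.mpr (Nat.lt_succ_of_le hknn)))
    have hdenpos : (0:ℝ) < ∑ σ : Fin n → Bool, cwWeight β p n σ :=
      lt_of_lt_of_le (by positivity) hden
    -- combine
    calc cwProb β p n E
        = (∑ σ : Fin n → Bool, E.indicator (cwWeight β p n) σ)
            / ∑ σ : Fin n → Bool, cwWeight β p n σ := rfl
      _ ≤ (((n:ℝ)+1) * Real.exp ((n:ℝ)*(Real.log 2 + S)))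
            / (Real.exp ((n:ℝ)*(Real.log 2 + bahH β p (xs n))) / ((n:ℝ)+1)) := by
          apply div_le_div₀ (by positivity) hnum (by positivity) hden
      _ = ((n:ℝ)+1)^2 * Real.exp ((n:ℝ)*(Real.log 2 + S)
            - (n:ℝ)*(Real.log 2 + bahH β p (xs n))) := by
          rw [Real.exp_sub]
          field_simp
      _ ≤ ((n:ℝ)+1)^2 * Real.exp (-(c*(n:ℝ))) := by
          apply mul_le_mul_of_nonneg_left _ (by positivity)
          apply Real.exp_le_exp.mpr
          nlinarith [hgood, hn0.le]
  · exact tendsto_aux hcpos
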